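/- Fix a finite set S of products with profits r_i ∈ (0,1] for i ∈ S. Let D be a convex set of functions ℝ → ℝ containing the CDF F(S,u) (as a function of x) for every preference vector u ∈ [0,1]^S, and let U be a real-valued functional that is quasiconvex on D. Then the map u ↦ U(F(S,u)) is quasiconvex on [0,1]^S. -/

import Mathlib

/-- The CDF of the purchase-profit distribution of the MNL model with assortment `S`,
profits `r` and preference vector `v`. -/
noncomputable def mnlCDF {ι : Type*} (S : Finset ι) (r v : ι → ℝ) (x : ℝ) : ℝ :=
  if x < 0 then 0
  else (1 + ∑ i ∈ S.filter (fun i => r i ≤ x), v i) / (1 + ∑ i ∈ S, v i)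

/-- **Lemma (quasiconvexity in the preference parameters).**
If `U` is quasiconvex on a convex set `D` of functions containing the MNL CDFs `F(S,u)` for
all `u ∈ [0,1]^S`, then `u ↦ U(F(S,u))` is quasiconvex on `[0,1]^S`. -/
theorem mnl_risk_quasiconvex {ι : Type*} (S : Finset ι) (r : ι → ℝ)
    (hr : ∀ i ∈ S, 0 < r i ∧ r i ≤ 1)
    (Dset : Set (ℝ → ℝ)) (hDconv : Convex ℝ Dset)
    (hDF : ∀ u : ι → ℝ, (∀ i ∈ S, 0 ≤ u i ∧ u i ≤ 1) → mnlCDF S r u ∈ Dset)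
    (U : (ℝ → ℝ) → ℝ)
    (hU : ∀ F G : ℝ → ℝ, F ∈ Dset → G ∈ Dset → ∀ l : ℝ, 0 ≤ l → l ≤ 1 →
      U (l • F + (1 - l) • G) ≤ max (U F) (U G))
    (u u' : ι → ℝ) (hu : ∀ i ∈ S, 0 ≤ u i ∧ u i ≤ 1) (hu' : ∀ i ∈ S, 0 ≤ u' i ∧ u' i ≤ 1)
    (l : ℝ) (hl0 : 0 ≤ l) (hl1 : l ≤ 1) :
    U (mnlCDF S r (fun i => l * u i + (1 - l) * u' i)) ≤
      max (U (mnlCDF S r u)) (U (mnlCDF S r u')) := by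
  set A : ℝ := 1 + ∑ i ∈ S, u i with hA
  set B : ℝ := 1 + ∑ i ∈ S, u' i with hB
  have hA1 : (1:ℝ) ≤ A := by
    have : (0:ℝ) ≤ ∑ i ∈ S, u i := Finset.sum_nonneg fun i hi => (hu i hi).1
    linarith
  have hB1 : (1:ℝ) ≤ B := by
    have : (0:ℝ) ≤ ∑ i ∈ S, u' i := Finset.sum_nonneg fun i hi => (hu' i hi).1
    linarith
  have hApos : (0:ℝ) < A := lt_of_lt_of_le one_pos hA1
  have hBpos : (0:ℝ) < B := lt_of_lt_of_le one_pos hB1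
  set C : ℝ := l * A + (1 - l) * B with hC
  have hCpos : (0:ℝ) < C := by nlinarith
  set m : ℝ := l * A / C with hm
  have hm0 : 0 ≤ m := div_nonneg (by positivity) hCpos.le
  have hm1 : m ≤ 1 := by
    rw [hm, div_le_one hCpos]
    nlinarith
  have key : mnlCDF S r (fun i => l * u i + (1 - l) * u' i)
      = m • mnlCDF S r u + (1 - m) • mnlCDF S r u' := by
    funext x
    simp only [Pi.add_apply, Pi.smul_apply, smul_eq_mul, mnlCDF]
    by_cases hx : x < 0
    · simp [hx]
    · simp only [hx, if_neg, ↓reduceIte]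
      have hden : 1 + ∑ i ∈ S, (l * u i + (1 - l) * u' i) = C := by
        rw [Finset.sum_add_distrib, ← Finset.mul_sum, ← Finset.mul_sum]
        ring
      have hnum : 1 + ∑ i ∈ S.filter (fun i => r i ≤ x), (l * u i + (1 - l) * u' i)
          = l * (1 + ∑ i ∈ S.filter (fun i => r i ≤ x), u i)
            + (1 - l) * (1 + ∑ i ∈ S.filter (fun i => r i ≤ x), u' i) := by
        rw [Finset.sum_add_distrib, ← Finset.mul_sum, ← Finset.mul_sum]
        ring
      rw [hden, hnum, hm, ← hA, ← hB]
      field_simp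
      rw [hC]
      ring
  rw [key]
  exact hU _ _ (hDF u hu) (hDF u' hu') m hm0 hm1
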